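/- Every finite-dimensional Hopf algebra over a field has a bijective antipode. -/

import Mathlib

open Coalgebra TensorProduct LinearMap

namespace LSAux

variable {k H : Type*} [Field k] [Ring H] [HopfAlgebra k H]

local notation "S" => HopfAlgebra.antipode (R := k) (A := H)

/-- scalar counit collapse, left -/
lemma cl_left (x : H) {ι : Type*} (r : Coalgebra.Repr k x ι) :
    ∑ i ∈ r.index, counit (R := k) (r.left i) • r.right i = x := by
  have := congrArg (TensorProduct.lid k H) (sum_counit_tmul_eq r)
  rw [map_sum] at this
  simpa using this

lemma cr (x : H) {ι : Type*} (r : Coalgebra.Repr k x ι) :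
    ∑ i ∈ r.index, counit (R := k) (r.right i) • r.left i = x := by
  have := congrArg (TensorProduct.rid k H) (sum_tmul_counit_eq r)
  rw [map_sum] at this
  simpa using this

/-- f applied to antipode collapse -/
lemma sumf_antipode_mul {V : Type*} [AddCommMonoid V] [Module k V]
    (x : H) {ι : Type*} (r : Coalgebra.Repr k x ι) (f : H →ₗ[k] V) :
    ∑ i ∈ r.index, f (S (r.left i) * r.right i) = counit (R := k) x • f 1 := by
  rw [← map_sum, HopfAlgebra.sum_antipode_mul_eq_smul, map_smul]

lemma sumf_mul_antipode {V : Type*} [AddCommMonoid V] [Module k V]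
    (x : H) {ι : Type*} (r : Coalgebra.Repr k x ι) (f : H →ₗ[k] V) :
    ∑ i ∈ r.index, f (r.left i * S (r.right i)) = counit (R := k) x • f 1 := by
  rw [← map_sum, HopfAlgebra.sum_mul_antipode_eq_smul, map_smul]

/-- the key coassociativity lemma in contracted form -/
lemma sum3_eq {V : Type*} [AddCommMonoid V] [Module k V]
    (x : H) {ι κ Λ : Type*} (r : Coalgebra.Repr k x ι) (r1 : (i : r.ι) → Coalgebra.Repr k (r.left i) κ)
    (r2 : (i : r.ι) → Coalgebra.Repr k (r.right i) Λ) (Φ : H ⊗[k] (H ⊗[k] H) →ₗ[k] V) :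
    ∑ i ∈ r.index, ∑ j ∈ (r1 i).index,
        Φ ((r1 i).left j ⊗ₜ[k] ((r1 i).right j ⊗ₜ[k] r.right i))
    = ∑ i ∈ r.index, ∑ j ∈ (r2 i).index,
        Φ (r.left i ⊗ₜ[k] ((r2 i).left j ⊗ₜ[k] (r2 i).right j)) := by
  have base := sum_tmul_tmul_eq r r1 r2
  have := congrArg Φ base
  rw [map_sum, map_sum] at this
  simp only [map_sum] at this
  exact this

/-- a `Repr` for a product -/
noncomputable def mulRepr (x y : H) {ι κ : Type*} (r : Coalgebra.Repr k x ι) (s : Coalgebra.Repr k y κ) :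
    Coalgebra.Repr k (x * y) (ι × κ) where
  index := r.index ×ˢ s.index
  left := fun p => r.left p.1 * s.left p.2
  right := fun p => r.right p.1 * s.right p.2
  eq := by
    rw [Bialgebra.comul_mul, ← r.eq, ← s.eq, Finset.sum_mul_sum]
    rw [Finset.sum_product]
    simp [Algebra.TensorProduct.tmul_mul_tmul]

section Conv
variable {A : Type*} [Semiring A] [Algebra k A]

/-- convolution of linear maps out of `H` into an algebra `A` -/
noncomputable def conv (f g : H →ₗ[k] A) : H →ₗ[k] A :=
  LinearMap.mul' k A ∘ₗ TensorProduct.map f g ∘ₗ Coalgebra.comul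

lemma conv_apply (f g : H →ₗ[k] A) (x : H) {ι : Type*} (r : Coalgebra.Repr k x ι) :
    conv f g x = ∑ i ∈ r.index, f (r.left i) * g (r.right i) := by
  simp only [conv, LinearMap.comp_apply, ← r.eq, map_sum, TensorProduct.map_tmul,
    LinearMap.mul'_apply]

/-- the unit for convolution -/
noncomputable def convOne : H →ₗ[k] A :=
  (Algebra.linearMap k A) ∘ₗ Coalgebra.counit (R := k) (A := H)

lemma convOne_apply (x : H) : (convOne (k := k) (H := H) (A := A)) x = counit (R := k) x • (1 : A) := by
  simp [convOne, Algebra.smul_def]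

lemma conv_one_left (f : H →ₗ[k] A) : conv convOne f = f := by
  ext x
  rw [conv_apply _ _ x (ℛ k x)]
  simp only [convOne_apply]
  calc ∑ i ∈ (ℛ k x).index, (counit (R := k) ((ℛ k x).left i) • (1:A)) * f ((ℛ k x).right i)
      = ∑ i ∈ (ℛ k x).index, f (counit (R := k) ((ℛ k x).left i) • (ℛ k x).right i) := by
        simp [smul_mul_assoc]
    _ = f x := by rw [← map_sum, cl_left x (ℛ k x)]

lemma conv_one_right (f : H →ₗ[k] A) : conv f convOne = f := by
  ext x
  rw [conv_apply _ _ x (ℛ k x)]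
  simp only [convOne_apply]
  calc ∑ i ∈ (ℛ k x).index, f ((ℛ k x).left i) * (counit (R := k) ((ℛ k x).right i) • (1:A))
      = ∑ i ∈ (ℛ k x).index, f (counit (R := k) ((ℛ k x).right i) • (ℛ k x).left i) := by
        simp [mul_smul_comm]
    _ = f x := by rw [← map_sum, cr x (ℛ k x)]

lemma conv_assoc (f g h : H →ₗ[k] A) : conv (conv f g) h = conv f (conv g h) := by
  ext x
  have key := sum3_eq x (ℛ k x) (fun i => ℛ k ((ℛ k x).left i)) (fun i => ℛ k ((ℛ k x).right i))
    (LinearMap.mul' k A ∘ₗ TensorProduct.map f (LinearMap.mul' k A ∘ₗ TensorProduct.map g h))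
  simp only [LinearMap.comp_apply, TensorProduct.map_tmul, LinearMap.mul'_apply] at key
  calc (conv (conv f g) h) x
      = ∑ i ∈ (ℛ k x).index, conv f g ((ℛ k x).left i) * h ((ℛ k x).right i) :=
        conv_apply _ _ x (ℛ k x)
    _ = ∑ i ∈ (ℛ k x).index, ∑ j ∈ (ℛ k ((ℛ k x).left i)).index,
          f ((ℛ k ((ℛ k x).left i)).left j) * ((ℛ k ((ℛ k x).left i)).right j |> g) *
            h ((ℛ k x).right i) := by
        refine Finset.sum_congr rfl (fun i _ => ?_)
        rw [conv_apply f g _ (ℛ k ((ℛ k x).left i)), Finset.sum_mul]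
    _ = ∑ i ∈ (ℛ k x).index, ∑ j ∈ (ℛ k ((ℛ k x).right i)).index,
          f ((ℛ k x).left i) * (g ((ℛ k ((ℛ k x).right i)).left j) *
            h ((ℛ k ((ℛ k x).right i)).right j)) := by
        simpa only [mul_assoc] using key
    _ = ∑ i ∈ (ℛ k x).index, f ((ℛ k x).left i) * conv g h ((ℛ k x).right i) := by
        refine Finset.sum_congr rfl (fun i _ => ?_)
        rw [conv_apply g h _ (ℛ k ((ℛ k x).right i)), Finset.mul_sum]
    _ = conv f (conv g h) x := (conv_apply _ _ x (ℛ k x)).symm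

lemma conv_unique (f g h : H →ₗ[k] A) (h1 : conv f g = convOne) (h2 : conv h f = convOne) :
    g = h := by
  have : conv h (conv f g) = conv (conv h f) g := (conv_assoc h f g).symm
  rw [h1, h2, conv_one_right, conv_one_left] at this
  exact this.symm

end Conv

lemma conv_antipode_id : conv (A := H) S LinearMap.id = convOne := by
  ext x
  rw [conv_apply _ _ x (ℛ k x), convOne_apply (k := k)]
  simpa using HopfAlgebra.sum_antipode_mul_eq_smul (ℛ k x)

lemma conv_id_antipode : conv (A := H) LinearMap.id S = convOne := by
  ext x
  rw [conv_apply _ _ x (ℛ k x), convOne_apply (k := k)]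
  simpa using HopfAlgebra.sum_mul_antipode_eq_smul (ℛ k x)

lemma antipode_one : S (1 : H) = 1 := by
  have := HopfAlgebra.sum_mul_antipode_eq_smul (R := k) (a := (1:H))
    ⟨({0} : Finset (Fin 1)), fun _ => 1, fun _ => 1, by
      rw [Finset.sum_singleton,
        show Coalgebra.comul (R := k) (1 : H) = 1 from map_one (Bialgebra.comulAlgHom k H),
        Algebra.TensorProduct.one_def]⟩
  simpa using this

lemma counit_antipode (x : H) : counit (R := k) (S x) = counit (R := k) x := by
  have h1 : ∑ i ∈ (ℛ k x).index,
      counit (R := k) (S ((ℛ k x).left i)) * counit (R := k) ((ℛ k x).right i)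
      = counit (R := k) x := by
    have := congrArg (counit (R := k)) (HopfAlgebra.sum_antipode_mul_eq_smul (ℛ k x))
    rw [map_sum] at this
    simpa [Bialgebra.counit_mul] using this
  have h2 : ∑ i ∈ (ℛ k x).index,
      counit (R := k) (S ((ℛ k x).left i)) * counit (R := k) ((ℛ k x).right i)
      = counit (R := k) (S x) := by
    calc ∑ i ∈ (ℛ k x).index,
        counit (R := k) (S ((ℛ k x).left i)) * counit (R := k) ((ℛ k x).right i)
        = ∑ i ∈ (ℛ k x).index,
          counit (R := k) (S (counit (R := k) ((ℛ k x).right i) • (ℛ k x).left i)) := by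
          simp [mul_comm]
      _ = counit (R := k) (S x) := by rw [← map_sum, ← map_sum, cr x (ℛ k x)]
  rw [← h1, h2]

/-- `∑ x₁ ⊗ S(x₂) x₃ = x ⊗ 1` -/
lemma lc1 (x : H) {ι κ : Type*} (r : Coalgebra.Repr k x ι) (r1 : (i : r.ι) → Coalgebra.Repr k (r.left i) κ) :
    ∑ i ∈ r.index, ∑ j ∈ (r1 i).index,
      (r1 i).left j ⊗ₜ[k] (S ((r1 i).right j) * r.right i) = x ⊗ₜ[k] (1 : H) := by
  have key := sum3_eq x r r1 (fun i => ℛ k (r.right i))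
    (LinearMap.lTensor H (LinearMap.mul' k H ∘ₗ TensorProduct.map S LinearMap.id))
  simp only [LinearMap.lTensor_tmul, LinearMap.comp_apply, TensorProduct.map_tmul,
    LinearMap.mul'_apply, LinearMap.id_coe, id_eq] at key
  rw [key]
  calc ∑ i ∈ r.index, ∑ j ∈ (ℛ k (r.right i)).index,
        r.left i ⊗ₜ[k] (S ((ℛ k (r.right i)).left j) * (ℛ k (r.right i)).right j)
      = ∑ i ∈ r.index, r.left i ⊗ₜ[k] (counit (R := k) (r.right i) • (1 : H)) := by
        refine Finset.sum_congr rfl (fun i _ => ?_)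
        rw [← TensorProduct.tmul_sum, HopfAlgebra.sum_antipode_mul_eq_smul (ℛ k (r.right i))]
    _ = (∑ i ∈ r.index, counit (R := k) (r.right i) • r.left i) ⊗ₜ[k] (1 : H) := by
        rw [TensorProduct.sum_tmul]
        exact Finset.sum_congr rfl (fun i _ => by
          rw [TensorProduct.tmul_smul, TensorProduct.smul_tmul'])
    _ = x ⊗ₜ[k] (1 : H) := by rw [cr x r]

/-- `∑ S(x₁) x₂ ⊗ x₃ = 1 ⊗ x` -/
lemma lc2 (x : H) {ι κ : Type*} (r : Coalgebra.Repr k x ι) (r2 : (i : r.ι) → Coalgebra.Repr k (r.right i) κ) :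
    ∑ i ∈ r.index, ∑ j ∈ (r2 i).index,
      (S (r.left i) * (r2 i).left j) ⊗ₜ[k] (r2 i).right j = (1 : H) ⊗ₜ[k] x := by
  have key := sum3_eq x r (fun i => ℛ k (r.left i)) r2
    ((LinearMap.rTensor H (LinearMap.mul' k H ∘ₗ TensorProduct.map S LinearMap.id)) ∘ₗ
      (TensorProduct.assoc k H H H).symm.toLinearMap)
  simp only [LinearMap.comp_apply, LinearEquiv.coe_coe, TensorProduct.assoc_symm_tmul,
    LinearMap.rTensor_tmul, TensorProduct.map_tmul, LinearMap.mul'_apply,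
    LinearMap.id_coe, id_eq] at key
  rw [← key]
  calc ∑ i ∈ r.index, ∑ j ∈ (ℛ k (r.left i)).index,
        (S ((ℛ k (r.left i)).left j) * (ℛ k (r.left i)).right j) ⊗ₜ[k] r.right i
      = ∑ i ∈ r.index, (counit (R := k) (r.left i) • (1 : H)) ⊗ₜ[k] r.right i := by
        refine Finset.sum_congr rfl (fun i _ => ?_)
        rw [← TensorProduct.sum_tmul, HopfAlgebra.sum_antipode_mul_eq_smul (ℛ k (r.left i))]
    _ = (1 : H) ⊗ₜ[k] (∑ i ∈ r.index, counit (R := k) (r.left i) • r.right i) := by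
        rw [TensorProduct.tmul_sum]
        exact Finset.sum_congr rfl (fun i _ => by
          rw [← TensorProduct.smul_tmul', ← TensorProduct.tmul_smul])
    _ = (1 : H) ⊗ₜ[k] x := by rw [cl_left x r]

/-- `∑ x₁ S(x₂) ⊗ x₃ = 1 ⊗ x` -/
lemma lc3 (x : H) {ι κ : Type*} (r : Coalgebra.Repr k x ι) (r2 : (i : r.ι) → Coalgebra.Repr k (r.right i) κ) :
    ∑ i ∈ r.index, ∑ j ∈ (r2 i).index,
      (r.left i * S ((r2 i).left j)) ⊗ₜ[k] (r2 i).right j = (1 : H) ⊗ₜ[k] x := by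
  have key := sum3_eq x r (fun i => ℛ k (r.left i)) r2
    ((LinearMap.rTensor H (LinearMap.mul' k H ∘ₗ TensorProduct.map LinearMap.id S)) ∘ₗ
      (TensorProduct.assoc k H H H).symm.toLinearMap)
  simp only [LinearMap.comp_apply, LinearEquiv.coe_coe, TensorProduct.assoc_symm_tmul,
    LinearMap.rTensor_tmul, TensorProduct.map_tmul, LinearMap.mul'_apply,
    LinearMap.id_coe, id_eq] at key
  rw [← key]
  calc ∑ i ∈ r.index, ∑ j ∈ (ℛ k (r.left i)).index,
        ((ℛ k (r.left i)).left j * S ((ℛ k (r.left i)).right j)) ⊗ₜ[k] r.right i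
      = ∑ i ∈ r.index, (counit (R := k) (r.left i) • (1 : H)) ⊗ₜ[k] r.right i := by
        refine Finset.sum_congr rfl (fun i _ => ?_)
        rw [← TensorProduct.sum_tmul, HopfAlgebra.sum_mul_antipode_eq_smul (ℛ k (r.left i))]
    _ = (1 : H) ⊗ₜ[k] (∑ i ∈ r.index, counit (R := k) (r.left i) • r.right i) := by
        rw [TensorProduct.tmul_sum]
        exact Finset.sum_congr rfl (fun i _ => by
          rw [← TensorProduct.smul_tmul', ← TensorProduct.tmul_smul])
    _ = (1 : H) ⊗ₜ[k] x := by rw [cl_left x r]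

lemma antipode_mul (x y : H) : S (x * y) = S y * S x := by
  set r := ℛ k x with hr
  set s := ℛ k y with hs
  set r' : (i : r.ι) → Coalgebra.Repr k (r.right i) (H × H) := fun i => ℛ k (r.right i) with hr'
  set s' : (j : s.ι) → Coalgebra.Repr k (s.right j) (H × H) := fun j => ℛ k (s.right j) with hs'
  have eval2 : ∑ j ∈ s.index, ∑ j' ∈ (s' j).index, ∑ i ∈ r.index, ∑ i' ∈ (r' i).index,
      S (s.left j) * S (r.left i) * ((r' i).left i' * (s' j).left j') *
        S ((r' i).right i' * (s' j).right j') = S (x * y) := by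
    have step1 : ∀ j, ∀ j', ∑ i ∈ r.index, ∑ i' ∈ (r' i).index,
        S (s.left j) * S (r.left i) * ((r' i).left i' * (s' j).left j') *
          S ((r' i).right i' * (s' j).right j')
        = S (s.left j) * ((s' j).left j' * S (x * (s' j).right j')) := by
      intro j j'
      have := congrArg (LinearMap.mul' k H ∘ₗ TensorProduct.map
        ((LinearMap.mulRight k ((s' j).left j')) ∘ₗ (LinearMap.mulLeft k (S (s.left j))))
        (S ∘ₗ (LinearMap.mulRight k ((s' j).right j')))) (lc2 x r r')
      rw [map_sum] at this
      simp only [map_sum, LinearMap.comp_apply, TensorProduct.map_tmul, LinearMap.mul'_apply,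
        LinearMap.mulRight_apply, LinearMap.mulLeft_apply] at this
      simpa only [mul_assoc, one_mul] using this
    calc ∑ j ∈ s.index, ∑ j' ∈ (s' j).index, ∑ i ∈ r.index, ∑ i' ∈ (r' i).index,
          S (s.left j) * S (r.left i) * ((r' i).left i' * (s' j).left j') *
            S ((r' i).right i' * (s' j).right j')
        = ∑ j ∈ s.index, ∑ j' ∈ (s' j).index,
            S (s.left j) * ((s' j).left j' * S (x * (s' j).right j')) := by
          exact Finset.sum_congr rfl (fun j _ => Finset.sum_congr rfl (fun j' _ => step1 j j'))
      _ = S (x * y) := by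
          have := congrArg (LinearMap.mul' k H ∘ₗ TensorProduct.map
            LinearMap.id (S ∘ₗ (LinearMap.mulLeft k x))) (lc2 y s s')
          rw [map_sum] at this
          simp only [map_sum, LinearMap.comp_apply, TensorProduct.map_tmul, LinearMap.mul'_apply,
            LinearMap.mulLeft_apply, LinearMap.id_coe, id_eq] at this
          simpa only [mul_assoc, one_mul] using this
  have eval1 : ∑ j ∈ s.index, ∑ j' ∈ (s' j).index, ∑ i ∈ r.index, ∑ i' ∈ (r' i).index,
      S (s.left j) * S (r.left i) * ((r' i).left i' * (s' j).left j') *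
        S ((r' i).right i' * (s' j).right j') = S y * S x := by
    calc ∑ j ∈ s.index, ∑ j' ∈ (s' j).index, ∑ i ∈ r.index, ∑ i' ∈ (r' i).index,
          S (s.left j) * S (r.left i) * ((r' i).left i' * (s' j).left j') *
            S ((r' i).right i' * (s' j).right j')
        = ∑ j ∈ s.index, ∑ i ∈ r.index, ∑ p ∈ (r' i).index ×ˢ (s' j).index,
            S (s.left j) * S (r.left i) *
              ((r' i).left p.1 * (s' j).left p.2 * S ((r' i).right p.1 * (s' j).right p.2)) := by
          refine Finset.sum_congr rfl (fun j _ => ?_)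
          rw [Finset.sum_comm]
          refine Finset.sum_congr rfl (fun i _ => ?_)
          rw [Finset.sum_product]
          rw [Finset.sum_comm]
          simp only [mul_assoc]
      _ = ∑ j ∈ s.index, ∑ i ∈ r.index,
            (counit (R := k) (r.right i * s.right j)) • (S (s.left j) * S (r.left i)) := by
          refine Finset.sum_congr rfl (fun j _ => Finset.sum_congr rfl (fun i _ => ?_))
          have := sumf_mul_antipode (r.right i * s.right j)
            (mulRepr (r.right i) (s.right j) (r' i) (s' j))
            (LinearMap.mulLeft k (S (s.left j) * S (r.left i)))
          simp only [mulRepr, LinearMap.mulLeft_apply, mul_one] at this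
          simpa only [mul_assoc] using this
      _ = S y * S x := by
          have hy : (∑ j ∈ s.index, counit (R := k) (s.right j) • S (s.left j)) = S y := by
            have := congrArg S (cr y s)
            rw [map_sum] at this
            simpa [map_smul] using this
          have hx : (∑ i ∈ r.index, counit (R := k) (r.right i) • S (r.left i)) = S x := by
            have := congrArg S (cr x r)
            rw [map_sum] at this
            simpa [map_smul] using this
          rw [← hy, ← hx, Finset.sum_mul_sum]
          refine Finset.sum_congr rfl (fun j _ => Finset.sum_congr rfl (fun i _ => ?_))
          rw [smul_mul_smul_comm, Bialgebra.counit_mul,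
            mul_comm (counit (R := k) (r.right i)) (counit (R := k) (s.right j))]
  rw [← eval2, eval1]

lemma sum3_eq' {V : Type*} [AddCommMonoid V] [Module k V]
    (x : H) {ι κ Λ : Type*} (r : Coalgebra.Repr k x ι) (r1 : (i : r.ι) → Coalgebra.Repr k (r.left i) κ)
    (r2 : (i : r.ι) → Coalgebra.Repr k (r.right i) Λ) (T : H →ₗ[k] H →ₗ[k] H →ₗ[k] V) :
    ∑ i ∈ r.index, ∑ j ∈ (r1 i).index, T ((r1 i).left j) ((r1 i).right j) (r.right i)
    = ∑ i ∈ r.index, ∑ j ∈ (r2 i).index, T (r.left i) ((r2 i).left j) ((r2 i).right j) := by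
  have := sum3_eq x r r1 r2
    (TensorProduct.lift ((TensorProduct.lift.equiv (RingHom.id k) H H V).toLinearMap ∘ₗ T))
  simpa using this

lemma mulLeft_add' (a b : H) :
    LinearMap.mulLeft k (a + b) = LinearMap.mulLeft k a + LinearMap.mulLeft k b := by
  ext z; simp [add_mul]

lemma mulLeft_smul' (c : k) (a : H) :
    LinearMap.mulLeft k (c • a) = c • LinearMap.mulLeft k a := by
  ext z; simp [smul_mul_assoc]

/-- left multiplication by a pure tensor -/
lemma tmul_mul (a b : H) (w : H ⊗[k] H) :
    (a ⊗ₜ[k] b) * w =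
      TensorProduct.map (LinearMap.mulLeft k a) (LinearMap.mulLeft k b) w := by
  induction w using TensorProduct.induction_on with
  | zero => simp
  | tmul u v => simp [Algebra.TensorProduct.tmul_mul_tmul]
  | add u v hu hv => rw [mul_add, map_add, hu, hv]

/-- the trilinear map `(a, b, c) ↦ (S b ⊗ S a) * Δ c` -/
noncomputable def Tco : H →ₗ[k] H →ₗ[k] H →ₗ[k] (H ⊗[k] H) :=
  LinearMap.mk₂ k (fun a b => (TensorProduct.map (LinearMap.mulLeft k (S b))
      (LinearMap.mulLeft k (S a))) ∘ₗ Coalgebra.comul)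
    (fun a a' b => by
      rw [map_add, mulLeft_add', TensorProduct.map_add_right, add_comp])
    (fun c a b => by
      rw [map_smul, mulLeft_smul', TensorProduct.map_smul_right, smul_comp])
    (fun a b b' => by
      rw [map_add, mulLeft_add', TensorProduct.map_add_left, add_comp])
    (fun c a b => by
      rw [map_smul, mulLeft_smul', TensorProduct.map_smul_left, smul_comp])

lemma comul_antipode' :
    Coalgebra.comul (R := k) (A := H) ∘ₗ S =
      (TensorProduct.comm k H H).toLinearMap ∘ₗ
        TensorProduct.map S S ∘ₗ Coalgebra.comul := by
  refine conv_unique (Coalgebra.comul (R := k) (A := H)) _ _ ?_ ?_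
  · -- conv Δ (Δ ∘ S) = convOne
    ext x
    rw [conv_apply _ _ x (ℛ k x), convOne_apply (k := k)]
    calc ∑ i ∈ (ℛ k x).index,
          Coalgebra.comul ((ℛ k x).left i) * (Coalgebra.comul ∘ₗ S) ((ℛ k x).right i)
        = ∑ i ∈ (ℛ k x).index,
            Coalgebra.comul (R := k) ((ℛ k x).left i * S ((ℛ k x).right i)) := by
          refine Finset.sum_congr rfl (fun i _ => ?_)
          rw [Bialgebra.comul_mul]; rfl
      _ = Coalgebra.comul (R := k) (∑ i ∈ (ℛ k x).index,
            (ℛ k x).left i * S ((ℛ k x).right i)) := (map_sum _ _ _).symm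
      _ = counit (R := k) x • (1 : H ⊗[k] H) := by
          rw [HopfAlgebra.sum_mul_antipode_eq_smul (ℛ k x), map_smul,
            show Coalgebra.comul (R := k) (1 : H) = 1 from map_one (Bialgebra.comulAlgHom k H)]
  · -- conv G Δ = convOne
    ext x
    rw [conv_apply _ _ x (ℛ k x), convOne_apply (k := k)]
    set r := ℛ k x with hrdef
    calc ∑ i ∈ r.index,
          ((TensorProduct.comm k H H).toLinearMap ∘ₗ
            TensorProduct.map S S ∘ₗ Coalgebra.comul) (r.left i) *
            Coalgebra.comul (r.right i)
        = ∑ i ∈ r.index, ∑ j ∈ (ℛ k (r.left i)).index,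
            Tco ((ℛ k (r.left i)).left j) ((ℛ k (r.left i)).right j) (r.right i) := by
          refine Finset.sum_congr rfl (fun i _ => ?_)
          rw [LinearMap.comp_apply, LinearMap.comp_apply, ← (ℛ k (r.left i)).eq]
          rw [map_sum, map_sum, Finset.sum_mul]
          refine Finset.sum_congr rfl (fun j _ => ?_)
          simp only [TensorProduct.map_tmul, LinearEquiv.coe_coe, TensorProduct.comm_tmul, Tco,
            LinearMap.mk₂_apply, LinearMap.comp_apply]
          rw [tmul_mul]
      _ = ∑ i ∈ r.index, ∑ j ∈ (ℛ k (r.right i)).index,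
            Tco (r.left i) ((ℛ k (r.right i)).left j) ((ℛ k (r.right i)).right j) :=
          sum3_eq' x r _ _ Tco
      _ = ∑ i ∈ r.index,
            (TensorProduct.map LinearMap.id (LinearMap.mulLeft k (S (r.left i))))
              (∑ j ∈ (ℛ k (r.right i)).index,
                ∑ j' ∈ (ℛ k ((ℛ k (r.right i)).right j)).index,
                  (S ((ℛ k (r.right i)).left j) *
                    (ℛ k ((ℛ k (r.right i)).right j)).left j') ⊗ₜ[k]
                    (ℛ k ((ℛ k (r.right i)).right j)).right j') := by
          refine Finset.sum_congr rfl (fun i _ => ?_)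
          rw [map_sum]
          refine Finset.sum_congr rfl (fun j _ => ?_)
          simp only [Tco, LinearMap.mk₂_apply, LinearMap.comp_apply,
            ← (ℛ k ((ℛ k (r.right i)).right j)).eq, map_sum]
          refine Finset.sum_congr rfl (fun j' _ => ?_)
          simp only [TensorProduct.map_tmul, LinearMap.mulLeft_apply, LinearMap.id_coe, id_eq,
            mul_assoc]
      _ = ∑ i ∈ r.index, (1 : H) ⊗ₜ[k] (S (r.left i) * r.right i) := by
          refine Finset.sum_congr rfl (fun i _ => ?_)
          rw [lc2 (r.right i) (ℛ k (r.right i)) (fun j => ℛ k ((ℛ k (r.right i)).right j))]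
          simp
      _ = counit (R := k) x • (1 : H ⊗[k] H) := by
          rw [← TensorProduct.tmul_sum, HopfAlgebra.sum_antipode_mul_eq_smul r,
            TensorProduct.tmul_smul, Algebra.TensorProduct.one_def]

/-- the antipode is an anti-coalgebra map -/
lemma comul_antipode (x : H) {ι : Type*} (r : Coalgebra.Repr k x ι) :
    Coalgebra.comul (R := k) (S x) =
      ∑ i ∈ r.index, S (r.right i) ⊗ₜ[k] S (r.left i) := by
  have := LinearMap.congr_fun (comul_antipode' (k := k) (H := H)) x
  simp only [LinearMap.comp_apply] at this
  rw [this, ← r.eq, map_sum, map_sum]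
  simp

/-- a `Repr` for `S x` -/
noncomputable def antipodeRepr (x : H) {ι : Type*} (r : Coalgebra.Repr k x ι) : Coalgebra.Repr k (S x) ι where
  index := r.index
  left := fun i => S (r.right i)
  right := fun i => S (r.left i)
  eq := (comul_antipode x r).symm

section FinDim
variable [FiniteDimensional k H]

local notation "𝓓" => Module.Dual k H

/-- evaluation pairing on the dual leg -/
noncomputable def eta {V : Type*} [AddCommMonoid V] [Module k V] (w : H) :
    𝓓 ⊗[k] V →ₗ[k] V :=
  (TensorProduct.lid k V).toLinearMap ∘ₗ
    LinearMap.rTensor V (Module.Dual.eval k H w)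

omit [FiniteDimensional k H] in
lemma eta_tmul {V : Type*} [AddCommMonoid V] [Module k V] (w : H) (u : 𝓓) (v : V) :
    eta w (u ⊗ₜ[k] v) = u w • v := by
  simp [eta, Module.Dual.eval]

/-- a fixed basis of `H` -/
noncomputable def bb : Module.Basis (Fin (Module.finrank k H)) k H := Module.finBasis k H

lemma expand_dual {V : Type*} [AddCommMonoid V] [Module k V] (t : 𝓓 ⊗[k] V) :
    t = ∑ i, (bb (k := k) (H := H)).dualBasis i ⊗ₜ[k] eta (bb (k := k) (H := H) i) t := by
  set b := bb (k := k) (H := H) with hb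
  induction t using TensorProduct.induction_on with
  | zero => simp
  | tmul u v =>
      have hu : ∑ i, u (b i) • b.dualBasis i = u := by
        have := b.dualBasis.sum_repr u
        simp only [Module.Basis.dualBasis_repr] at this
        exact this
      symm
      calc ∑ i, b.dualBasis i ⊗ₜ[k] eta (b i) (u ⊗ₜ[k] v)
          = ∑ i, (u (b i) • b.dualBasis i) ⊗ₜ[k] v := by
            refine Finset.sum_congr rfl (fun i _ => ?_)
            rw [eta_tmul, ← TensorProduct.smul_tmul]
      _ = (∑ i, u (b i) • b.dualBasis i) ⊗ₜ[k] v := (TensorProduct.sum_tmul _ _ _).symm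
      _ = u ⊗ₜ[k] v := by rw [hu]
  | add s t hs ht =>
      simp only [map_add, TensorProduct.tmul_add]
      rw [Finset.sum_add_distrib, ← hs, ← ht]

lemma eta_ext {V : Type*} [AddCommMonoid V] [Module k V] {t t' : 𝓓 ⊗[k] V}
    (h : ∀ w : H, eta w t = eta w t') : t = t' := by
  rw [expand_dual t, expand_dual t']
  exact Finset.sum_congr rfl (fun i _ => by rw [h _])

lemma basis_collapse (z : H) {V : Type*} [AddCommMonoid V] [Module k V] (F : H →ₗ[k] V) :
    ∑ i, (bb (k := k) (H := H)).dualBasis i z • F (bb (k := k) (H := H) i) = F z := by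
  set b := bb (k := k) (H := H) with hb
  have h1 : ∑ i, b.dualBasis i z • b i = z := by
    simp only [Module.Basis.dualBasis_apply]
    exact b.sum_repr z
  calc ∑ i, b.dualBasis i z • F (b i)
      = F (∑ i, b.dualBasis i z • b i) := by rw [map_sum]; simp [map_smul]
    _ = F z := by rw [h1]

/-- the coaction of `H` on the dual, in basis form -/
noncomputable def rho (u : 𝓓) : 𝓓 ⊗[k] H :=
  ∑ i, conv ((bb (k := k) (H := H)).dualBasis i) u ⊗ₜ[k] bb (k := k) (H := H) i

lemma eta_rho (u : 𝓓) (z : H) {ι : Type*} (rz : Coalgebra.Repr k z ι) :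
    eta z (rho u) = ∑ m ∈ rz.index, u (rz.right m) • rz.left m := by
  set b := bb (k := k) (H := H) with hb
  rw [rho, map_sum]
  calc ∑ i, eta z (conv (b.dualBasis i) u ⊗ₜ[k] b i)
      = ∑ i, (∑ m ∈ rz.index, b.dualBasis i (rz.left m) * u (rz.right m)) • b i := by
        refine Finset.sum_congr rfl (fun i _ => ?_)
        rw [eta_tmul, conv_apply _ _ z rz]
    _ = ∑ m ∈ rz.index, u (rz.right m) • rz.left m := by
        simp only [Finset.sum_smul]
        rw [Finset.sum_comm]
        refine Finset.sum_congr rfl (fun m _ => ?_)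
        have := basis_collapse (k := k) (rz.left m) (LinearMap.id (M := H) (R := k))
        simp only [LinearMap.id_coe, id_eq] at this
        calc ∑ i, (b.dualBasis i (rz.left m) * u (rz.right m)) • b i
            = u (rz.right m) • ∑ i, b.dualBasis i (rz.left m) • b i := by
              rw [Finset.smul_sum]
              refine Finset.sum_congr rfl (fun i _ => ?_)
              rw [mul_comm, mul_smul]
          _ = u (rz.right m) • rz.left m := by rw [this]

omit [FiniteDimensional k H] in
lemma mulRight_add' (a b : H) :
    LinearMap.mulRight k (a + b) = LinearMap.mulRight k a + LinearMap.mulRight k b := by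
  ext z; simp [mul_add]

omit [FiniteDimensional k H] in
lemma mulRight_smul' (c : k) (a : H) :
    LinearMap.mulRight k (c • a) = c • LinearMap.mulRight k a := by
  ext z; simp [mul_smul_comm]

/-- the right action of `H` on the dual: `(f · h)(x) = f (x * S h)` -/
noncomputable def actB : 𝓓 →ₗ[k] H →ₗ[k] 𝓓 :=
  LinearMap.mk₂ k (fun f h => f ∘ₗ LinearMap.mulRight k (S h))
    (fun f f' h => by rw [add_comp])
    (fun c f h => by rw [smul_comp])
    (fun f h h' => by rw [map_add, mulRight_add', comp_add])
    (fun c f h => by rw [map_smul, mulRight_smul', comp_smul])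

omit [FiniteDimensional k H] in
lemma actB_apply (f : 𝓓) (h x : H) : actB f h x = f (x * S h) := rfl

omit [FiniteDimensional k H] in
lemma actB_actB (f : 𝓓) (a b : H) : actB (actB f a) b = actB f (a * b) := by
  ext x
  simp only [actB_apply]
  rw [antipode_mul, ← mul_assoc]

omit [FiniteDimensional k H] in
lemma actB_one (f : 𝓓) : actB f 1 = f := by
  ext x
  rw [actB_apply, antipode_one, mul_one]

/-- convolution as a linear map in the second argument -/
noncomputable def convL (f : 𝓓) : 𝓓 →ₗ[k] 𝓓 where
  toFun g := conv f g
  map_add' g g' := by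
    ext x
    rw [LinearMap.add_apply, conv_apply f (g + g') x (ℛ k x), conv_apply f g x (ℛ k x),
      conv_apply f g' x (ℛ k x), ← Finset.sum_add_distrib]
    simp [mul_add]
  map_smul' c g := by
    ext x
    rw [RingHom.id_apply, LinearMap.smul_apply, conv_apply f (c • g) x (ℛ k x),
      conv_apply f g x (ℛ k x), Finset.smul_sum]
    refine Finset.sum_congr rfl (fun m _ => ?_)
    simp only [LinearMap.smul_apply, smul_eq_mul]
    ring

omit [FiniteDimensional k H] in
lemma convL_apply (f g : 𝓓) : convL f g = conv f g := rfl

/-- the projection onto coinvariants, `P u = ∑ u₀ · S u₁` -/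
noncomputable def PL : 𝓓 →ₗ[k] 𝓓 :=
  ∑ j, (LinearMap.lcomp k k
    (LinearMap.mulRight k (S (S (bb (k := k) (H := H) j))))) ∘ₗ
      convL ((bb (k := k) (H := H)).dualBasis j)

lemma PL_apply (u : 𝓓) :
    PL u = ∑ j, actB (conv ((bb (k := k) (H := H)).dualBasis j) u)
      (S (bb (k := k) (H := H) j)) := by
  rw [PL, LinearMap.sum_apply]
  rfl

lemma rho_sum {α : Type*} (s : Finset α) (v : α → 𝓓) :
    rho (∑ j ∈ s, v j) = ∑ j ∈ s, rho (v j) := by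
  simp only [rho]
  rw [Finset.sum_comm]
  refine Finset.sum_congr rfl (fun i _ => ?_)
  rw [← TensorProduct.sum_tmul]
  congr 1
  rw [show conv ((bb (k := k) (H := H)).dualBasis i) (∑ j ∈ s, v j)
      = convL ((bb (k := k) (H := H)).dualBasis i) (∑ j ∈ s, v j) from rfl, map_sum]
  rfl

/-- collapsed form of `eta` on `rho`, with a linear post-map -/
lemma eta_rho_map {V : Type*} [AddCommMonoid V] [Module k V]
    (u : 𝓓) (c : H) {ι : Type*} (rc : Coalgebra.Repr k c ι) (F : H →ₗ[k] V) :
    ∑ i, (conv ((bb (k := k) (H := H)).dualBasis i) u) c • F (bb (k := k) (H := H) i)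
      = ∑ p ∈ rc.index, u (rc.right p) • F (rc.left p) := by
  calc ∑ i, (conv ((bb (k := k) (H := H)).dualBasis i) u) c • F (bb (k := k) (H := H) i)
      = F (∑ i, (conv ((bb (k := k) (H := H)).dualBasis i) u) c • bb (k := k) (H := H) i) := by
        rw [map_sum]; simp [map_smul]
    _ = F (eta c (rho u)) := by
        congr 1
        rw [rho, map_sum]
        refine Finset.sum_congr rfl (fun i _ => ?_)
        rw [eta_tmul]
    _ = ∑ p ∈ rc.index, u (rc.right p) • F (rc.left p) := by
        rw [eta_rho u c rc, map_sum]; simp [map_smul]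

/-- the Hopf module compatibility: `ρ(u · h) = ∑ u₀ · h₁ ⊗ u₁ h₂` -/
lemma hopf_compat (u : 𝓓) (h : H) {ι : Type*} (rh : Coalgebra.Repr k h ι) :
    rho (actB u h) = ∑ j ∈ rh.index, ∑ i,
      actB (conv ((bb (k := k) (H := H)).dualBasis i) u) (rh.left j) ⊗ₜ[k]
        (bb (k := k) (H := H) i * rh.right j) := by
  set b := bb (k := k) (H := H) with hb
  refine eta_ext (fun w => ?_)
  set rw' := ℛ k w with hrw
  rw [eta_rho (actB u h) w rw']
  -- unfold the right hand side
  rw [map_sum]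
  have rhs_eval : ∀ j ∈ rh.index,
      eta w (∑ i, actB (conv (b.dualBasis i) u) (rh.left j) ⊗ₜ[k] (b i * rh.right j))
      = ∑ p ∈ rw'.index, ∑ q ∈ (ℛ k (rh.left j)).index,
          u (rw'.right p * S ((ℛ k (rh.left j)).left q)) •
            (rw'.left p * S ((ℛ k (rh.left j)).right q) * rh.right j) := by
    intro j _
    rw [map_sum]
    calc ∑ i, eta w (actB (conv (b.dualBasis i) u) (rh.left j) ⊗ₜ[k] (b i * rh.right j))
        = ∑ i, (conv (b.dualBasis i) u) (w * S (rh.left j)) •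
            LinearMap.mulRight k (rh.right j) (b i) := by
          refine Finset.sum_congr rfl (fun i _ => ?_)
          rw [eta_tmul, actB_apply]
          rfl
      _ = ∑ p ∈ (mulRepr w (S (rh.left j)) rw'
            (antipodeRepr (rh.left j) (ℛ k (rh.left j)))).index,
            u ((mulRepr w (S (rh.left j)) rw' (antipodeRepr (rh.left j) (ℛ k (rh.left j)))).right p) •
              LinearMap.mulRight k (rh.right j)
                ((mulRepr w (S (rh.left j)) rw' (antipodeRepr (rh.left j) (ℛ k (rh.left j)))).left p) :=
          eta_rho_map u (w * S (rh.left j)) _ (LinearMap.mulRight k (rh.right j))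
      _ = ∑ p ∈ rw'.index ×ˢ (ℛ k (rh.left j)).index,
            u (rw'.right p.1 * S ((ℛ k (rh.left j)).left p.2)) •
              (rw'.left p.1 * S ((ℛ k (rh.left j)).right p.2) * rh.right j) := rfl
      _ = ∑ p ∈ rw'.index, ∑ q ∈ (ℛ k (rh.left j)).index,
            u (rw'.right p * S ((ℛ k (rh.left j)).left q)) •
              (rw'.left p * S ((ℛ k (rh.left j)).right q) * rh.right j) :=
          Finset.sum_product _ _ _
  rw [Finset.sum_congr rfl rhs_eval]
  rw [Finset.sum_comm]
  refine Finset.sum_congr rfl (fun p _ => ?_)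
  -- inner: apply Θ to lc1
  have theta := congrArg ((TensorProduct.lid k H).toLinearMap ∘ₗ
    TensorProduct.map (u ∘ₗ LinearMap.mulLeft k (rw'.right p) ∘ₗ S)
      (LinearMap.mulLeft k (rw'.left p)))
    (lc1 h rh (fun j => ℛ k (rh.left j)))
  rw [map_sum] at theta
  simp only [map_sum, LinearMap.comp_apply, TensorProduct.map_tmul, LinearEquiv.coe_coe,
    TensorProduct.lid_tmul, LinearMap.mulLeft_apply] at theta
  simp only [actB_apply]
  trans (u (rw'.right p * S h) • (rw'.left p * 1))
  · rw [mul_one]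
  rw [← theta]
  refine Finset.sum_congr rfl (fun j _ => Finset.sum_congr rfl (fun q _ => ?_))
  rw [mul_assoc]

/-- left integrals in the dual -/
def IsLeftIntegral (l : 𝓓) : Prop := ∀ g : 𝓓, conv g l = g 1 • l

lemma rho_integral (l : 𝓓) (hl : IsLeftIntegral l) (h : H) {ι : Type*} (rh : Coalgebra.Repr k h ι) :
    rho (actB l h) = ∑ j ∈ rh.index, actB l (rh.left j) ⊗ₜ[k] rh.right j := by
  set b := bb (k := k) (H := H) with hb
  rw [hopf_compat l h rh]
  refine Finset.sum_congr rfl (fun j _ => ?_)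
  calc ∑ i, actB (conv (b.dualBasis i) l) (rh.left j) ⊗ₜ[k] (b i * rh.right j)
      = ∑ i, actB l (rh.left j) ⊗ₜ[k] ((b.dualBasis i 1 • b i) * rh.right j) := by
        refine Finset.sum_congr rfl (fun i _ => ?_)
        rw [hl (b.dualBasis i), map_smul, LinearMap.smul_apply, TensorProduct.smul_tmul,
          smul_mul_assoc]
    _ = actB l (rh.left j) ⊗ₜ[k] ((∑ i, b.dualBasis i 1 • b i) * rh.right j) := by
        rw [Finset.sum_mul, TensorProduct.tmul_sum]
    _ = actB l (rh.left j) ⊗ₜ[k] rh.right j := by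
        have h1 := basis_collapse (k := k) (1 : H) (LinearMap.id (R := k) (M := H))
        simp only [LinearMap.id_coe, id_eq] at h1
        rw [h1, one_mul]

/-- the trilinear map `(a,b,c) ↦ u c • (a ⊗ b)` -/
noncomputable def TT (u : 𝓓) : H →ₗ[k] H →ₗ[k] H →ₗ[k] (H ⊗[k] H) :=
  LinearMap.mk₂ k (fun a b' => LinearMap.smulRight u (a ⊗ₜ[k] b'))
    (fun a a' b' => by ext c; simp [TensorProduct.add_tmul, smul_add])
    (fun c a b' => by
      ext z
      simp only [LinearMap.smulRight_apply, LinearMap.smul_apply, TensorProduct.smul_tmul']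
      rw [smul_comm])
    (fun a b' b'' => by ext c; simp [TensorProduct.tmul_add, smul_add])
    (fun c a b' => by
      ext z
      simp only [LinearMap.smulRight_apply, LinearMap.smul_apply, TensorProduct.tmul_smul]
      rw [smul_comm])

/-- coassociativity of the coaction -/
lemma CA (u : 𝓓) :
    ∑ i, ∑ j, conv ((bb (k := k) (H := H)).dualBasis j)
        (conv ((bb (k := k) (H := H)).dualBasis i) u) ⊗ₜ[k]
        (bb (k := k) (H := H) j ⊗ₜ[k] bb (k := k) (H := H) i)
      = ∑ i, conv ((bb (k := k) (H := H)).dualBasis i) u ⊗ₜ[k]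
          (Coalgebra.comul (R := k) (bb (k := k) (H := H) i)) := by
  set b := bb (k := k) (H := H) with hb
  refine eta_ext (fun w => ?_)
  set rw' := ℛ k w with hrw
  rw [map_sum, map_sum]
  calc ∑ i, eta w (∑ j, conv (b.dualBasis j) (conv (b.dualBasis i) u) ⊗ₜ[k] (b j ⊗ₜ[k] b i))
      = ∑ i, ∑ m ∈ rw'.index, (conv (b.dualBasis i) u) (rw'.right m) •
          (rw'.left m ⊗ₜ[k] b i) := by
        refine Finset.sum_congr rfl (fun i _ => ?_)
        rw [map_sum]
        calc ∑ j, eta w (conv (b.dualBasis j) (conv (b.dualBasis i) u) ⊗ₜ[k] (b j ⊗ₜ[k] b i))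
            = ∑ j, (conv (b.dualBasis j) (conv (b.dualBasis i) u)) w •
                ((TensorProduct.mk k H H).flip (b i)) (b j) := by
              refine Finset.sum_congr rfl (fun j _ => ?_)
              rw [eta_tmul]; rfl
          _ = ∑ m ∈ rw'.index, (conv (b.dualBasis i) u) (rw'.right m) •
                (rw'.left m ⊗ₜ[k] b i) :=
              eta_rho_map (conv (b.dualBasis i) u) w rw' ((TensorProduct.mk k H H).flip (b i))
    _ = ∑ m ∈ rw'.index, ∑ i, (conv (b.dualBasis i) u) (rw'.right m) •
          ((TensorProduct.mk k H H) (rw'.left m)) (b i) := by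
        rw [Finset.sum_comm]; rfl
    _ = ∑ m ∈ rw'.index, ∑ n ∈ (ℛ k (rw'.right m)).index,
          u ((ℛ k (rw'.right m)).right n) • (rw'.left m ⊗ₜ[k] (ℛ k (rw'.right m)).left n) := by
        refine Finset.sum_congr rfl (fun m _ => ?_)
        exact eta_rho_map u (rw'.right m) (ℛ k (rw'.right m)) ((TensorProduct.mk k H H) (rw'.left m))
    _ = ∑ m ∈ rw'.index, ∑ n ∈ (ℛ k (rw'.left m)).index,
          u (rw'.right m) • ((ℛ k (rw'.left m)).left n ⊗ₜ[k] (ℛ k (rw'.left m)).right n) := by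
        have key := sum3_eq' w rw' (fun m => ℛ k (rw'.left m)) (fun m => ℛ k (rw'.right m)) (TT u)
        simp only [TT, LinearMap.mk₂_apply, LinearMap.smulRight_apply] at key
        exact key.symm
    _ = ∑ i, eta w (conv (b.dualBasis i) u ⊗ₜ[k] Coalgebra.comul (R := k) (b i)) := by
        rw [show (∑ i, eta w (conv (b.dualBasis i) u ⊗ₜ[k] Coalgebra.comul (R := k) (b i)))
            = ∑ i, (conv (b.dualBasis i) u) w • Coalgebra.comul (R := k) (b i) from
          Finset.sum_congr rfl (fun i _ => by rw [eta_tmul])]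
        rw [eta_rho_map u w rw' (Coalgebra.comul (R := k) (A := H))]
        refine Finset.sum_congr rfl (fun m _ => ?_)
        rw [← (ℛ k (rw'.left m)).eq, Finset.smul_sum]

/-- inner trilinear map for `Ψ` -/
noncomputable def T3 : 𝓓 →ₗ[k] H →ₗ[k] H →ₗ[k] (𝓓 ⊗[k] H) where
  toFun u' :=
    { toFun := fun s => (TensorProduct.map (actB u' ∘ₗ S)
        (LinearMap.mulLeft k s ∘ₗ S)) ∘ₗ (TensorProduct.comm k H H).toLinearMap ∘ₗ
          Coalgebra.comul
      map_add' := fun s s' => by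
        rw [mulLeft_add', add_comp, TensorProduct.map_add_right, add_comp]
      map_smul' := fun c s => by
        rw [RingHom.id_apply, mulLeft_smul', smul_comp, TensorProduct.map_smul_right, smul_comp] }
  map_add' u' u'' := by
    ext s : 1
    simp only [LinearMap.coe_mk, AddHom.coe_mk, LinearMap.add_apply]
    rw [map_add, add_comp, TensorProduct.map_add_left, add_comp]
  map_smul' c u' := by
    ext s : 1
    simp only [LinearMap.coe_mk, AddHom.coe_mk, RingHom.id_apply, LinearMap.smul_apply]
    rw [map_smul, smul_comp, TensorProduct.map_smul_left, smul_comp]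

/-- the map `u' ⊗ (s ⊗ t) ↦ ∑ (u' · S t₂) ⊗ s S(t₁)` -/
noncomputable def Psi : 𝓓 ⊗[k] (H ⊗[k] H) →ₗ[k] 𝓓 ⊗[k] H :=
  TensorProduct.lift ((TensorProduct.lift.equiv (RingHom.id k) H H (𝓓 ⊗[k] H)).toLinearMap ∘ₗ T3)

lemma Psi_tmul (u' : 𝓓) (s t : H) {ι : Type*} (rt : Coalgebra.Repr k t ι) :
    Psi (u' ⊗ₜ[k] (s ⊗ₜ[k] t)) = ∑ m ∈ rt.index,
      actB u' (S (rt.right m)) ⊗ₜ[k] (s * S (rt.left m)) := by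
  simp only [Psi, TensorProduct.lift.tmul, LinearMap.coe_comp, Function.comp_apply,
    LinearEquiv.coe_toLinearMap, TensorProduct.lift.equiv_apply, T3, LinearMap.coe_mk,
    AddHom.coe_mk]
  rw [← rt.eq, map_sum, map_sum]
  refine Finset.sum_congr rfl (fun m _ => ?_)
  simp only [LinearEquiv.coe_coe, TensorProduct.comm_tmul, TensorProduct.map_tmul,
    LinearMap.comp_apply, LinearMap.mulLeft_apply]

/-- `P u` is coinvariant : `ρ(P u) = P u ⊗ 1` -/
lemma rho_PL (u : 𝓓) : rho (PL u) = PL u ⊗ₜ[k] (1 : H) := by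
  set b := bb (k := k) (H := H) with hb
  conv_lhs => rw [PL_apply]
  rw [rho_sum]
  calc ∑ j, rho (actB (conv (b.dualBasis j) u) (S (b j)))
      = ∑ j, ∑ m ∈ (ℛ k (b j)).index, ∑ i,
          actB (conv (b.dualBasis i) (conv (b.dualBasis j) u)) (S ((ℛ k (b j)).right m)) ⊗ₜ[k]
            (b i * S ((ℛ k (b j)).left m)) := by
        refine Finset.sum_congr rfl (fun j _ => ?_)
        exact hopf_compat (conv (b.dualBasis j) u) (S (b j)) (antipodeRepr (b j) (ℛ k (b j)))
    _ = ∑ j, ∑ i, Psi (conv (b.dualBasis i) (conv (b.dualBasis j) u) ⊗ₜ[k] (b i ⊗ₜ[k] b j)) := by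
        refine Finset.sum_congr rfl (fun j _ => ?_)
        rw [Finset.sum_comm]
        refine Finset.sum_congr rfl (fun i _ => ?_)
        rw [Psi_tmul _ _ _ (ℛ k (b j))]
    _ = Psi (∑ i, ∑ j, conv (b.dualBasis j) (conv (b.dualBasis i) u) ⊗ₜ[k] (b j ⊗ₜ[k] b i)) := by
        rw [map_sum]
        simp only [map_sum]
    _ = Psi (∑ i, conv (b.dualBasis i) u ⊗ₜ[k] (Coalgebra.comul (R := k) (b i))) := by rw [CA u]
    _ = ∑ i, ∑ w ∈ (ℛ k (b i)).index, ∑ n ∈ (ℛ k ((ℛ k (b i)).right w)).index,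
          actB (conv (b.dualBasis i) u) (S ((ℛ k ((ℛ k (b i)).right w)).right n)) ⊗ₜ[k]
            ((ℛ k (b i)).left w * S ((ℛ k ((ℛ k (b i)).right w)).left n)) := by
        rw [map_sum]
        refine Finset.sum_congr rfl (fun i _ => ?_)
        rw [← (ℛ k (b i)).eq, TensorProduct.tmul_sum, map_sum]
        refine Finset.sum_congr rfl (fun w _ => ?_)
        exact Psi_tmul _ _ _ (ℛ k ((ℛ k (b i)).right w))
    _ = ∑ i, actB (conv (b.dualBasis i) u) (S (b i)) ⊗ₜ[k] (1 : H) := by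
        refine Finset.sum_congr rfl (fun i _ => ?_)
        have kappa := congrArg ((TensorProduct.map (actB (conv (b.dualBasis i) u) ∘ₗ S)
          LinearMap.id) ∘ₗ (TensorProduct.comm k H H).toLinearMap)
          (lc3 (b i) (ℛ k (b i)) (fun w => ℛ k ((ℛ k (b i)).right w)))
        rw [map_sum] at kappa
        simp only [map_sum, LinearMap.comp_apply, LinearEquiv.coe_coe, TensorProduct.comm_tmul,
          TensorProduct.map_tmul, LinearMap.id_coe, id_eq] at kappa
        exact kappa
    _ = PL u ⊗ₜ[k] (1 : H) := by
        rw [PL_apply, TensorProduct.sum_tmul, ← hb]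

lemma conv_via_rho (g v : 𝓓) (z : H) : conv g v z = g (eta z (rho v)) := by
  rw [eta_rho v z (ℛ k z), map_sum, conv_apply g v z (ℛ k z)]
  refine Finset.sum_congr rfl (fun m _ => ?_)
  rw [map_smul, smul_eq_mul, mul_comm]

lemma PL_integral (u : 𝓓) : IsLeftIntegral (PL u) := by
  intro g
  ext z
  rw [conv_via_rho, rho_PL, eta_tmul, map_smul, LinearMap.smul_apply]
  simp [mul_comm]

/-- the reconstruction identity: `∑ P(u₀)·u₁ = u` -/
lemma claim2 (m : 𝓓) (z : H) :
    ∑ i, (PL (conv ((bb (k := k) (H := H)).dualBasis i) m))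
      (z * S (bb (k := k) (H := H) i)) = m z := by
  set b := bb (k := k) (H := H) with hb
  have xi := congrArg ((TensorProduct.lift (LinearMap.id (R := k) (M := 𝓓))) ∘ₗ
    (LinearMap.lTensor 𝓓 (LinearMap.mulLeft k z ∘ₗ LinearMap.mul' k H ∘ₗ
      TensorProduct.map S (S ∘ₗ S) ∘ₗ (TensorProduct.comm k H H).toLinearMap))) (CA m)
  rw [map_sum, map_sum] at xi
  simp only [map_sum, LinearMap.comp_apply, LinearMap.lTensor_tmul, LinearEquiv.coe_coe,
    TensorProduct.comm_tmul, TensorProduct.map_tmul, LinearMap.mul'_apply,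
    LinearMap.mulLeft_apply, TensorProduct.lift.tmul, LinearMap.id_coe, id_eq] at xi
  calc ∑ i, (PL (conv (b.dualBasis i) m)) (z * S (b i))
      = ∑ i, ∑ j, (conv (b.dualBasis j) (conv (b.dualBasis i) m))
          (z * (S (b i) * S (S (b j)))) := by
        refine Finset.sum_congr rfl (fun i _ => ?_)
        rw [PL_apply, LinearMap.sum_apply]
        refine Finset.sum_congr rfl (fun j _ => ?_)
        rw [actB_apply, mul_assoc]
    _ = ∑ i, ∑ w ∈ (ℛ k (b i)).index, (conv (b.dualBasis i) m)
          (z * (S ((ℛ k (b i)).right w) * S (S ((ℛ k (b i)).left w)))) := by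
        rw [← hb] at xi
        rw [xi]
        refine Finset.sum_congr rfl (fun i _ => ?_)
        rw [← (ℛ k (b i)).eq]
        simp only [map_sum, Finset.mul_sum]
        refine Finset.sum_congr rfl (fun w _ => ?_)
        simp only [LinearEquiv.coe_coe, TensorProduct.comm_tmul, TensorProduct.map_tmul,
          LinearMap.mul'_apply, LinearMap.comp_apply]
    _ = ∑ i, (conv (b.dualBasis i) m) z • counit (R := k) (b i) := by
        refine Finset.sum_congr rfl (fun i _ => ?_)
        have inner : ∑ w ∈ (ℛ k (b i)).index,
            S ((ℛ k (b i)).right w) * S (S ((ℛ k (b i)).left w)) =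
            counit (R := k) (b i) • 1 := by
          calc ∑ w ∈ (ℛ k (b i)).index,
              S ((ℛ k (b i)).right w) * S (S ((ℛ k (b i)).left w))
              = ∑ w ∈ (ℛ k (b i)).index, S (S ((ℛ k (b i)).left w) * (ℛ k (b i)).right w) := by
                refine Finset.sum_congr rfl (fun w _ => ?_)
                rw [antipode_mul]
            _ = counit (R := k) (b i) • S 1 := sumf_antipode_mul (b i) (ℛ k (b i)) S
            _ = counit (R := k) (b i) • 1 := by rw [antipode_one]
        calc ∑ w ∈ (ℛ k (b i)).index, (conv (b.dualBasis i) m)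
              (z * (S ((ℛ k (b i)).right w) * S (S ((ℛ k (b i)).left w))))
            = (conv (b.dualBasis i) m) (z * (counit (R := k) (b i) • 1)) := by
              rw [← map_sum]
              · congr 1
                rw [← Finset.mul_sum, inner]
          _ = (conv (b.dualBasis i) m) z • counit (R := k) (b i) := by
              rw [mul_smul_comm, mul_one, map_smul]
              simp [mul_comm]
    _ = m z := by
        rw [eta_rho_map m z (ℛ k z) (Coalgebra.counit (R := k) (A := H))]
        calc ∑ p ∈ (ℛ k z).index, m ((ℛ k z).right p) • counit (R := k) ((ℛ k z).left p)
            = m (∑ p ∈ (ℛ k z).index, counit (R := k) ((ℛ k z).left p) • (ℛ k z).right p) := by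
              rw [map_sum]
              refine Finset.sum_congr rfl (fun p _ => ?_)
              rw [map_smul]
              simp [mul_comm]
          _ = m z := by rw [cl_left z (ℛ k z)]

/-- `P (λ · a) = ε(a) λ` for a left integral `λ` -/
lemma P_act_integral (l : 𝓓) (hl : IsLeftIntegral l) (a : H) :
    PL (actB l a) = counit (R := k) a • l := by
  set b := bb (k := k) (H := H) with hb
  have chi := congrArg (TensorProduct.lift (actB.compl₂ S)) (rho_integral l hl a (ℛ k a))
  rw [map_sum] at chi
  simp only [rho, map_sum, TensorProduct.lift.tmul, LinearMap.compl₂_apply] at chi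
  calc PL (actB l a)
      = ∑ i, actB (conv (b.dualBasis i) (actB l a)) (S (b i)) := PL_apply _
    _ = ∑ j ∈ (ℛ k a).index, actB (actB l ((ℛ k a).left j)) (S ((ℛ k a).right j)) := chi
    _ = ∑ j ∈ (ℛ k a).index, actB l ((ℛ k a).left j * S ((ℛ k a).right j)) := by
        refine Finset.sum_congr rfl (fun j _ => ?_)
        rw [actB_actB]
    _ = counit (R := k) a • l := by
        rw [← map_sum, HopfAlgebra.sum_mul_antipode_eq_smul (ℛ k a), map_smul, actB_one]

/-- the key injectivity identity -/
lemma claim3 (l : 𝓓) (hl : IsLeftIntegral l) (h z : H) :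
    ∑ i, (PL (conv ((bb (k := k) (H := H)).dualBasis i) (actB l h))) z •
      bb (k := k) (H := H) i = l z • h := by
  set b := bb (k := k) (H := H) with hb
  have chi := congrArg (eta z ∘ₗ LinearMap.rTensor H PL) (rho_integral l hl h (ℛ k h))
  rw [map_sum] at chi
  simp only [rho, map_sum, LinearMap.comp_apply, LinearMap.rTensor_tmul] at chi
  calc ∑ i, (PL (conv (b.dualBasis i) (actB l h))) z • b i
      = ∑ i, eta z (PL (conv (b.dualBasis i) (actB l h)) ⊗ₜ[k] b i) := by
        refine Finset.sum_congr rfl (fun i _ => (eta_tmul _ _ _).symm)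
    _ = ∑ j ∈ (ℛ k h).index, eta z (PL (actB l ((ℛ k h).left j)) ⊗ₜ[k] (ℛ k h).right j) := chi
    _ = ∑ j ∈ (ℛ k h).index, l z • counit (R := k) ((ℛ k h).left j) • (ℛ k h).right j := by
        refine Finset.sum_congr rfl (fun j _ => ?_)
        rw [P_act_integral l hl, eta_tmul, LinearMap.smul_apply, smul_eq_mul, mul_comm, mul_smul]
    _ = l z • h := by
        rw [← Finset.smul_sum, cl_left h (ℛ k h)]

lemma exists_nonzero_integral : ∃ l : 𝓓, l ≠ 0 ∧ IsLeftIntegral l := by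
  by_contra hcon
  push_neg at hcon
  have hall : ∀ u : 𝓓, PL u = 0 := by
    intro u
    by_contra hPu
    exact (hcon (PL u) hPu) (PL_integral u)
  have h1 : (Coalgebra.counit (R := k) (A := H)) (1 : H) = (0 : k) := by
    have := claim2 (Coalgebra.counit (R := k) (A := H)) 1
    simp only [hall, LinearMap.zero_apply, Finset.sum_const_zero] at this
    exact this.symm
  rw [Bialgebra.counit_one] at h1
  exact one_ne_zero h1

lemma antipode_injective : Function.Injective (S : H →ₗ[k] H) := by
  rw [← LinearMap.ker_eq_bot, LinearMap.ker_eq_bot']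
  intro h hSh
  obtain ⟨l, hl0, hl⟩ := exists_nonzero_integral (k := k) (H := H)
  obtain ⟨z, hz⟩ : ∃ z : H, l z ≠ 0 := by
    by_contra hz
    push_neg at hz
    exact hl0 (by ext w; simp [hz w])
  have hact : actB l h = 0 := by
    have : LinearMap.mulRight k (S h) = 0 := by
      rw [hSh]; ext w; simp
    show l ∘ₗ LinearMap.mulRight k (S h) = 0
    rw [this, comp_zero]
  have hconv : ∀ f : 𝓓, conv f (0 : 𝓓) = (0 : 𝓓) := fun f => map_zero (convL f)
  have := claim3 l hl h z
  rw [hact] at this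
  simp only [hconv, map_zero, LinearMap.zero_apply, zero_smul, Finset.sum_const_zero] at this
  have h0 : l z • h = 0 := this.symm
  rcases smul_eq_zero.mp h0 with h' | h'
  · exact (hz h').elim
  · exact h'

end FinDim
end LSAux

/-- Every finite-dimensional Hopf algebra over a field has a bijective antipode. -/
theorem antipode_bijective_of_finiteDimensional
    {k H : Type*} [Field k] [Ring H] [HopfAlgebra k H] [FiniteDimensional k H] :
    Function.Bijective (HopfAlgebra.antipode (R := k) (A := H)) := by
  have hinj := LSAux.antipode_injective (k := k) (H := H)
  exact ⟨hinj, (LinearMap.injective_iff_surjective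
    (f := HopfAlgebra.antipode (R := k) (A := H))).mp hinj⟩
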